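/- Two irreducible finite-dimensional representations rho and rho' of the triangle algebra (with q^2 a primitive N-th root of unity, q^N = (-1)^{N+1}) are isomorphic if and only if they determine the same scalars x1, x2, x3 (where rho(X_i^N) = x_i Id) and the same h (where rho(H) = h Id, H = q^{-1}X1X2X3). -/

import Mathlib

namespace TriangleAux

variable {V : Type*} [AddCommGroup V] [Module ℂ V]
variable {V' : Type*} [AddCommGroup V'] [Module ℂ V']

lemma smul_cancel {a b : ℂ} {w : V} (hw : w ≠ 0) (hab : a • w = b • w) : a = b := by
  by_contra hne
  have h0 : (a - b) • w = 0 := by rw [sub_smul, hab, sub_self]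
  rcases smul_eq_zero.mp h0 with h1 | h1
  · exact hne (sub_eq_zero.mp h1)
  · exact hw h1

lemma unit_inj (X : Module.End ℂ V) (hu : IsUnit X) : Function.Injective X := by
  intro a b hab
  have h1 : (↑hu.unit⁻¹ * X) a = (↑hu.unit⁻¹ * X) b := by
    simp only [Module.End.mul_apply, hab]
  simpa [IsUnit.val_inv_mul] using h1

lemma pow_inj (X : Module.End ℂ V) (hu : Function.Injective X) (m : ℕ) :
    Function.Injective (⇑(X ^ m)) := by
  induction m with
  | zero => simpa [Module.End.coe_one] using Function.injective_id
  | succ n ih =>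
    intro a b hab
    rw [pow_succ', Module.End.mul_apply, Module.End.mul_apply] at hab
    exact ih (hu hab)

lemma eigen_pow (lam : ℂ) (X : Module.End ℂ V) {v : V} (hv : X v = lam • v) (m : ℕ) :
    (X ^ m) v = lam ^ m • v := by
  induction m with
  | zero => simp
  | succ n ih =>
    rw [pow_succ', Module.End.mul_apply, ih, map_smul, hv, smul_smul]
    ring_nf

lemma eigen_shift (q lam : ℂ) (X1 X2 : Module.End ℂ V)
    (r : X1 * X2 = (q ^ 2) • (X2 * X1)) {v : V} (hv : X1 v = lam • v) (j : ℕ) :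
    X1 ((X2 ^ j) v) = ((q ^ 2) ^ j * lam) • ((X2 ^ j) v) := by
  induction j with
  | zero => simpa using hv
  | succ n ih =>
    have h1 : X1 (X2 ((X2 ^ n) v)) = (q ^ 2) • X2 (X1 ((X2 ^ n) v)) := by
      have := congrArg (fun f : Module.End ℂ V => f ((X2 ^ n) v)) r
      simpa [Module.End.mul_apply] using this
    rw [pow_succ', Module.End.mul_apply, h1, ih, map_smul, smul_smul]
    ring_nf

lemma L_pow (L : V → V') (X : Module.End ℂ V) (Y : Module.End ℂ V')
    (hc : ∀ u, L (X u) = Y (L u)) (m : ℕ) : ∀ u, L ((X ^ m) u) = (Y ^ m) (L u) := by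
  induction m with
  | zero => simp
  | succ n ih =>
    intro u
    rw [pow_succ, Module.End.mul_apply, pow_succ, Module.End.mul_apply, ih, hc]

lemma stab_pow (W : Submodule ℂ V) (f : Module.End ℂ V) (hf : ∀ u ∈ W, f u ∈ W) (m : ℕ) :
    ∀ u ∈ W, (f ^ m) u ∈ W := by
  induction m with
  | zero => intro u hu; simpa using hu
  | succ n ih =>
    intro u hu
    rw [pow_succ, Module.End.mul_apply]
    exact ih _ (hf u hu)


lemma basisB {N : ℕ} (hN : 0 < N) (q : ℂ) (hq : IsPrimitiveRoot (q ^ 2) N)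
    (X1 X2 : Module.End ℂ V)
    (hinj2 : Function.Injective X2)
    (r : X1 * X2 = (q ^ 2) • (X2 * X1))
    (x1 x2 : ℂ) (hx1 : x1 ≠ 0)
    (hX1N : X1 ^ N = x1 • (1 : Module.End ℂ V))
    (hX2N : X2 ^ N = x2 • (1 : Module.End ℂ V))
    (hstab : ∀ W : Submodule ℂ V, (∀ u ∈ W, X1 u ∈ W) → (∀ u ∈ W, X2 u ∈ W) → W = ⊥ ∨ W = ⊤)
    (lam : ℂ) (v : V) (hv : v ≠ 0) (hev : X1 v = lam • v) :
    ∃ b : Module.Basis (Fin N) ℂ V, ∀ j : Fin N, b j = (X2 ^ (j : ℕ)) v := by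
  have hlamN : lam ^ N = x1 := by
    have h1 : (X1 ^ N) v = lam ^ N • v := eigen_pow lam X1 hev N
    have h2 : (X1 ^ N) v = x1 • v := by rw [hX1N]; simp
    exact smul_cancel hv (h1.symm.trans h2)
  have hlam : lam ≠ 0 := by
    intro h0
    rw [h0, zero_pow hN.ne'] at hlamN
    exact hx1 hlamN.symm
  set xs : Fin N → V := fun j => (X2 ^ (j : ℕ)) v with hxs
  have hxsne : ∀ j : Fin N, xs j ≠ 0 := fun j h0 => hv (pow_inj X2 hinj2 (j : ℕ) (by simpa using h0))
  have heig : ∀ j : Fin N, X1 (xs j) = ((q ^ 2) ^ (j : ℕ) * lam) • xs j :=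
    fun j => eigen_shift q lam X1 X2 r hev (j : ℕ)
  have hμinj : Function.Injective (fun j : Fin N => (q ^ 2) ^ (j : ℕ) * lam) := by
    intro i j hij
    have h1 : (q ^ 2) ^ (i : ℕ) = (q ^ 2) ^ (j : ℕ) := mul_right_cancel₀ hlam hij
    exact Fin.ext (hq.pow_inj i.isLt j.isLt h1)
  have li : LinearIndependent ℂ xs := by
    apply Module.End.eigenvectors_linearIndependent' X1 _ hμinj xs
    intro j
    exact Module.End.hasEigenvector_iff.mpr ⟨Module.End.mem_eigenspace_iff.mpr (heig j), hxsne j⟩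
  set W : Submodule ℂ V := Submodule.span ℂ (Set.range xs) with hW
  have hmemW : ∀ j : Fin N, xs j ∈ W := fun j => Submodule.subset_span ⟨j, rfl⟩
  have hst1 : ∀ u ∈ W, X1 u ∈ W := by
    intro u hu
    induction hu using Submodule.span_induction with
    | mem x hx =>
      obtain ⟨j, rfl⟩ := hx
      rw [heig j]
      exact W.smul_mem _ (hmemW j)
    | zero => simp
    | add x y _ _ hx hy => rw [map_add]; exact W.add_mem hx hy
    | smul c x _ hx => rw [map_smul]; exact W.smul_mem _ hx
  have hst2 : ∀ u ∈ W, X2 u ∈ W := by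
    intro u hu
    induction hu using Submodule.span_induction with
    | mem x hx =>
      obtain ⟨j, rfl⟩ := hx
      have hs : X2 (xs j) = (X2 ^ ((j : ℕ) + 1)) v := by
        rw [pow_succ', Module.End.mul_apply]
      by_cases hj : (j : ℕ) + 1 < N
      · rw [hs]
        exact hmemW ⟨(j : ℕ) + 1, hj⟩
      · have hjN : (j : ℕ) + 1 = N := le_antisymm j.isLt (not_lt.mp hj)
        have : X2 (xs j) = x2 • v := by
          rw [hs, hjN, hX2N]; simp
        rw [this]
        have hv0 : v ∈ W := by simpa [hxs] using hmemW ⟨0, hN⟩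
        exact W.smul_mem _ hv0
    | zero => simp
    | add x y _ _ hx hy => rw [map_add]; exact W.add_mem hx hy
    | smul c x _ hx => rw [map_smul]; exact W.smul_mem _ hx
  have hWtop : W = ⊤ := by
    rcases hstab W hst1 hst2 with hbot | htop
    · exfalso
      have : xs ⟨0, hN⟩ ∈ (⊥ : Submodule ℂ V) := hbot ▸ hmemW ⟨0, hN⟩
      exact hxsne ⟨0, hN⟩ (Submodule.mem_bot ℂ |>.mp this)
    · exact htop
  refine ⟨Module.Basis.mk li (by rw [← hW, hWtop]), ?_⟩
  intro j
  rw [Module.Basis.mk_apply]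

end TriangleAux

/-- Two irreducible finite-dimensional representations of the triangle algebra are
isomorphic if and only if they determine the same scalars `x1, x2, x3, h`. -/
theorem triangle_irreducible_classification {N : ℕ} (hN : 0 < N) (q : ℂ)
    (hq : IsPrimitiveRoot (q ^ 2) N) (hqN : q ^ N = (-1 : ℂ) ^ (N + 1))
    {V V' : Type*} [AddCommGroup V] [Module ℂ V] [FiniteDimensional ℂ V] [Nontrivial V]
    [AddCommGroup V'] [Module ℂ V'] [FiniteDimensional ℂ V'] [Nontrivial V']
    (X1 X2 X3 : Module.End ℂ V) (Y1 Y2 Y3 : Module.End ℂ V')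
    (hu1 : IsUnit X1) (hu2 : IsUnit X2) (hu3 : IsUnit X3)
    (hv1 : IsUnit Y1) (hv2 : IsUnit Y2) (hv3 : IsUnit Y3)
    (rX12 : X1 * X2 = (q ^ 2) • (X2 * X1))
    (rX23 : X2 * X3 = (q ^ 2) • (X3 * X2))
    (rX31 : X3 * X1 = (q ^ 2) • (X1 * X3))
    (rY12 : Y1 * Y2 = (q ^ 2) • (Y2 * Y1))
    (rY23 : Y2 * Y3 = (q ^ 2) • (Y3 * Y2))
    (rY31 : Y3 * Y1 = (q ^ 2) • (Y1 * Y3))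
    (hirrX : ∀ W : Submodule ℂ V, (∀ v ∈ W, X1 v ∈ W) → (∀ v ∈ W, X2 v ∈ W) →
      (∀ v ∈ W, X3 v ∈ W) → W = ⊥ ∨ W = ⊤)
    (hirrY : ∀ W : Submodule ℂ V', (∀ v ∈ W, Y1 v ∈ W) → (∀ v ∈ W, Y2 v ∈ W) →
      (∀ v ∈ W, Y3 v ∈ W) → W = ⊥ ∨ W = ⊤)
    (x1 x2 x3 h x1' x2' x3' h' : ℂ)
    (hX1N : X1 ^ N = x1 • (1 : Module.End ℂ V))
    (hX2N : X2 ^ N = x2 • (1 : Module.End ℂ V))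
    (hX3N : X3 ^ N = x3 • (1 : Module.End ℂ V))
    (hXH : q⁻¹ • (X1 * X2 * X3) = h • (1 : Module.End ℂ V))
    (hY1N : Y1 ^ N = x1' • (1 : Module.End ℂ V'))
    (hY2N : Y2 ^ N = x2' • (1 : Module.End ℂ V'))
    (hY3N : Y3 ^ N = x3' • (1 : Module.End ℂ V'))
    (hYH : q⁻¹ • (Y1 * Y2 * Y3) = h' • (1 : Module.End ℂ V')) :
    (∃ L : V ≃ₗ[ℂ] V', (∀ v, L (X1 v) = Y1 (L v)) ∧ (∀ v, L (X2 v) = Y2 (L v)) ∧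
      (∀ v, L (X3 v) = Y3 (L v))) ↔
    (x1 = x1' ∧ x2 = x2' ∧ x3 = x3' ∧ h = h') := by
  have hq0 : q ≠ 0 := by
    intro h0
    rw [h0, zero_pow hN.ne'] at hqN
    exact pow_ne_zero (N + 1) (neg_ne_zero.mpr (one_ne_zero : (1:ℂ) ≠ 0)) hqN.symm
  obtain ⟨v0, hv0⟩ := exists_ne (0 : V)
  obtain ⟨w0, hw0⟩ := exists_ne (0 : V')
  have nonzero_of : ∀ (X : Module.End ℂ V) (c : ℂ), IsUnit X → X ^ N = c • 1 → c ≠ 0 := by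
    intro X c hu hXN h0
    subst h0
    have h1 : (X ^ N) v0 = 0 := by rw [hXN]; simp
    exact hv0 (TriangleAux.pow_inj X (TriangleAux.unit_inj X hu) N (by simpa using h1))
  have nonzero_of' : ∀ (Y : Module.End ℂ V') (c : ℂ), IsUnit Y → Y ^ N = c • 1 → c ≠ 0 := by
    intro Y c hu hYN h0
    subst h0
    have h1 : (Y ^ N) w0 = 0 := by rw [hYN]; simp
    exact hw0 (TriangleAux.pow_inj Y (TriangleAux.unit_inj Y hu) N (by simpa using h1))
  have hx1 : x1 ≠ 0 := nonzero_of X1 x1 hu1 hX1N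
  have hx2 : x2 ≠ 0 := nonzero_of X2 x2 hu2 hX2N
  constructor
  · rintro ⟨L, hL1, hL2, hL3⟩
    have hLv0 : L v0 ≠ 0 := fun h0 => hv0 (by simpa using (LinearEquiv.map_eq_zero_iff L).mp h0)
    have key : ∀ (X : Module.End ℂ V) (Y : Module.End ℂ V') (a b : ℂ),
        (∀ u, L (X u) = Y (L u)) → X ^ N = a • 1 → Y ^ N = b • 1 → a = b := by
      intro X Y a b hc hXN hYN
      have e1 := TriangleAux.L_pow (⇑L) X Y hc N v0
      rw [hXN, hYN] at e1
      simp only [LinearMap.smul_apply, Module.End.one_apply, map_smul] at e1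
      exact TriangleAux.smul_cancel hLv0 e1
    refine ⟨key X1 Y1 x1 x1' hL1 hX1N hY1N, key X2 Y2 x2 x2' hL2 hX2N hY2N,
      key X3 Y3 x3 x3' hL3 hX3N hY3N, ?_⟩
    have e4 : q⁻¹ • (X1 (X2 (X3 v0))) = h • v0 := by
      have := congrArg (fun f : Module.End ℂ V => f v0) hXH
      simpa [Module.End.mul_apply] using this
    have e5 : q⁻¹ • (Y1 (Y2 (Y3 (L v0)))) = h • L v0 := by
      have := congrArg L e4
      simp only [map_smul, hL1, hL2, hL3] at this
      exact this
    have e6 : q⁻¹ • (Y1 (Y2 (Y3 (L v0)))) = h' • L v0 := by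
      have := congrArg (fun f : Module.End ℂ V' => f (L v0)) hYH
      simpa [Module.End.mul_apply] using this
    exact TriangleAux.smul_cancel hLv0 (e5.symm.trans e6)
  · rintro ⟨hx1e, hx2e, hx3e, hhe⟩
    subst hx1e; subst hx2e; subst hx3e; subst hhe
    haveI : NeZero N := ⟨hN.ne'⟩
    have hN1 : N - 1 + 1 = N := Nat.succ_pred_eq_of_pos hN
    have hx12 : x1 * x2 ≠ 0 := mul_ne_zero hx1 hx2
    -- operator identities expressing X3 (resp. Y3) via X1, X2
    have hMX : X1 * (X2 * X3) = (q * h) • (1 : Module.End ℂ V) := by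
      have := congrArg (fun f : Module.End ℂ V => q • f) hXH
      simp only [smul_smul, mul_inv_cancel₀ hq0, one_smul, mul_assoc] at this
      exact this
    have hMY : Y1 * (Y2 * Y3) = (q * h) • (1 : Module.End ℂ V') := by
      have := congrArg (fun f : Module.End ℂ V' => q • f) hYH
      simp only [smul_smul, mul_inv_cancel₀ hq0, one_smul, mul_assoc] at this
      exact this
    have hx1mul : X1 ^ (N-1) * X1 = x1 • (1 : Module.End ℂ V) := by
      rw [← pow_succ, hN1, hX1N]
    have hx2mul : X2 ^ (N-1) * X2 = x2 • (1 : Module.End ℂ V) := by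
      rw [← pow_succ, hN1, hX2N]
    have hy1mul : Y1 ^ (N-1) * Y1 = x1 • (1 : Module.End ℂ V') := by
      rw [← pow_succ, hN1, hY1N]
    have hy2mul : Y2 ^ (N-1) * Y2 = x2 • (1 : Module.End ℂ V') := by
      rw [← pow_succ, hN1, hY2N]
    have keyX : X2 ^ (N-1) * (X1 ^ (N-1) * (X1 * (X2 * X3))) = (x1 * x2) • X3 := by
      rw [← mul_assoc (X1 ^ (N-1)) X1 (X2 * X3), hx1mul, smul_mul_assoc, one_mul,
        mul_smul_comm, ← mul_assoc (X2 ^ (N-1)) X2 X3, hx2mul, smul_mul_assoc, one_mul,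
        smul_smul]
    have keyY : Y2 ^ (N-1) * (Y1 ^ (N-1) * (Y1 * (Y2 * Y3))) = (x1 * x2) • Y3 := by
      rw [← mul_assoc (Y1 ^ (N-1)) Y1 (Y2 * Y3), hy1mul, smul_mul_assoc, one_mul,
        mul_smul_comm, ← mul_assoc (Y2 ^ (N-1)) Y2 Y3, hy2mul, smul_mul_assoc, one_mul,
        smul_smul]
    have hX3f : (x1 * x2) • X3 = (q * h) • (X2 ^ (N-1) * X1 ^ (N-1)) := by
      rw [← keyX, hMX, mul_smul_comm, mul_one, mul_smul_comm]
    have hY3f : (x1 * x2) • Y3 = (q * h) • (Y2 ^ (N-1) * Y1 ^ (N-1)) := by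
      rw [← keyY, hMY, mul_smul_comm, mul_one, mul_smul_comm]
    have hX3p : ∀ u, (x1 * x2) • X3 u = (q * h) • (X2 ^ (N-1)) ((X1 ^ (N-1)) u) := by
      intro u
      have := congrArg (fun f : Module.End ℂ V => f u) hX3f
      simpa [Module.End.mul_apply] using this
    have hY3p : ∀ u, (x1 * x2) • Y3 u = (q * h) • (Y2 ^ (N-1)) ((Y1 ^ (N-1)) u) := by
      intro u
      have := congrArg (fun f : Module.End ℂ V' => f u) hY3f
      simpa [Module.End.mul_apply] using this
    -- upgraded irreducibility: stability under X1, X2 suffices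
    have hstabX : ∀ W : Submodule ℂ V, (∀ u ∈ W, X1 u ∈ W) → (∀ u ∈ W, X2 u ∈ W) →
        W = ⊥ ∨ W = ⊤ := by
      intro W h1 h2
      refine hirrX W h1 h2 ?_
      intro u hu
      have e : X3 u = ((x1*x2)⁻¹ * (q*h)) • (X2 ^ (N-1)) ((X1 ^ (N-1)) u) := by
        rw [← smul_smul, ← hX3p u, smul_smul, inv_mul_cancel₀ hx12, one_smul]
      rw [e]
      exact W.smul_mem _ (TriangleAux.stab_pow W X2 h2 _ _ (TriangleAux.stab_pow W X1 h1 _ _ hu))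
    have hstabY : ∀ W : Submodule ℂ V', (∀ u ∈ W, Y1 u ∈ W) → (∀ u ∈ W, Y2 u ∈ W) →
        W = ⊥ ∨ W = ⊤ := by
      intro W h1 h2
      refine hirrY W h1 h2 ?_
      intro u hu
      have e : Y3 u = ((x1*x2)⁻¹ * (q*h)) • (Y2 ^ (N-1)) ((Y1 ^ (N-1)) u) := by
        rw [← smul_smul, ← hY3p u, smul_smul, inv_mul_cancel₀ hx12, one_smul]
      rw [e]
      exact W.smul_mem _ (TriangleAux.stab_pow W Y2 h2 _ _ (TriangleAux.stab_pow W Y1 h1 _ _ hu))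
    -- eigenvectors
    obtain ⟨lam0, hlam0⟩ := Module.End.exists_eigenvalue X1
    obtain ⟨v, hv⟩ := hlam0.exists_hasEigenvector
    have hvne : v ≠ 0 := hv.2
    have hvev : X1 v = lam0 • v := hv.apply_eq_smul
    obtain ⟨mu, hmu⟩ := Module.End.exists_eigenvalue Y1
    obtain ⟨w, hw⟩ := hmu.exists_hasEigenvector
    have hwne : w ≠ 0 := hw.2
    have hwev : Y1 w = mu • w := hw.apply_eq_smul
    have hlamN : lam0 ^ N = x1 := by
      have h1 := TriangleAux.eigen_pow lam0 X1 hvev N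
      rw [hX1N] at h1
      simp only [LinearMap.smul_apply, Module.End.one_apply] at h1
      exact (TriangleAux.smul_cancel hvne h1).symm
    have hmuN : mu ^ N = x1 := by
      have h1 := TriangleAux.eigen_pow mu Y1 hwev N
      rw [hY1N] at h1
      simp only [LinearMap.smul_apply, Module.End.one_apply] at h1
      exact (TriangleAux.smul_cancel hwne h1).symm
    have hlamne : lam0 ≠ 0 := fun h0 => hx1 (by rw [← hlamN, h0, zero_pow hN.ne'])
    have hmune : mu ≠ 0 := fun h0 => hx1 (by rw [← hmuN, h0, zero_pow hN.ne'])
    have hroot : (lam0 * mu⁻¹) ^ N = 1 := by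
      rw [mul_pow, hlamN, inv_pow, hmuN, mul_inv_cancel₀ hx1]
    obtain ⟨k, hk, hkeq⟩ := hq.eq_pow_of_pow_eq_one hroot
    have hlam_eq : lam0 = (q ^ 2) ^ k * mu := by
      rw [hkeq]
      field_simp
    set v' : V' := (Y2 ^ k) w with hv'
    have hv'ev : Y1 v' = lam0 • v' := by
      rw [hlam_eq]
      exact TriangleAux.eigen_shift q mu Y1 Y2 rY12 hwev k
    have hv'ne : v' ≠ 0 := fun h0 =>
      hwne (TriangleAux.pow_inj Y2 (TriangleAux.unit_inj Y2 hv2) k (by simpa using h0))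
    -- bases
    obtain ⟨b, hb⟩ := TriangleAux.basisB hN q hq X1 X2 (TriangleAux.unit_inj X2 hu2) rX12
      x1 x2 hx1 hX1N hX2N hstabX lam0 v hvne hvev
    obtain ⟨b', hb'⟩ := TriangleAux.basisB hN q hq Y1 Y2 (TriangleAux.unit_inj Y2 hv2) rY12
      x1 x2 hx1 hY1N hY2N hstabY lam0 v' hv'ne hv'ev
    set L : V ≃ₗ[ℂ] V' := b.equiv b' (Equiv.refl _) with hLdef
    have hLb : ∀ j : Fin N, L ((X2 ^ (j : ℕ)) v) = (Y2 ^ (j : ℕ)) v' := by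
      intro j
      have := b.equiv_apply j b' (Equiv.refl _)
      simp only [Equiv.refl_apply] at this
      rw [hb j, hb' j] at this
      exact this
    have hLv : L v = v' := by
      have := hLb ⟨0, hN⟩
      simpa using this
    have key1 : ∀ j : Fin N, L (X1 (b j)) = Y1 (L (b j)) := by
      intro j
      rw [hb j, TriangleAux.eigen_shift q lam0 X1 X2 rX12 hvev (j : ℕ), map_smul, hLb j,
        TriangleAux.eigen_shift q lam0 Y1 Y2 rY12 hv'ev (j : ℕ)]
    have key2 : ∀ j : Fin N, L (X2 (b j)) = Y2 (L (b j)) := by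
      intro j
      rw [hb j, hLb j]
      have hs : X2 ((X2 ^ (j : ℕ)) v) = (X2 ^ ((j : ℕ) + 1)) v := by
        rw [pow_succ', Module.End.mul_apply]
      have hs' : Y2 ((Y2 ^ (j : ℕ)) v') = (Y2 ^ ((j : ℕ) + 1)) v' := by
        rw [pow_succ', Module.End.mul_apply]
      rw [hs, hs']
      by_cases hj : (j : ℕ) + 1 < N
      · have := hLb ⟨(j : ℕ) + 1, hj⟩
        simpa using this
      · have hjN : (j : ℕ) + 1 = N := le_antisymm j.isLt (not_lt.mp hj)
        rw [hjN, hX2N, hY2N]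
        simp only [LinearMap.smul_apply, Module.End.one_apply, map_smul]
        rw [hLv]
    have hL1 : ∀ u, L (X1 u) = Y1 (L u) := by
      intro u
      have heq : L.toLinearMap ∘ₗ (X1 : V →ₗ[ℂ] V) = (Y1 : V' →ₗ[ℂ] V') ∘ₗ L.toLinearMap :=
        b.ext fun j => by simpa using key1 j
      simpa using DFunLike.congr_fun heq u
    have hL2 : ∀ u, L (X2 u) = Y2 (L u) := by
      intro u
      have heq : L.toLinearMap ∘ₗ (X2 : V →ₗ[ℂ] V) = (Y2 : V' →ₗ[ℂ] V') ∘ₗ L.toLinearMap :=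
        b.ext fun j => by simpa using key2 j
      simpa using DFunLike.congr_fun heq u
    have hL3 : ∀ u, L (X3 u) = Y3 (L u) := by
      intro u
      have h1 : (x1*x2) • L (X3 u) = (x1*x2) • Y3 (L u) := by
        calc (x1*x2) • L (X3 u) = L ((x1*x2) • X3 u) := (map_smul L _ _).symm
          _ = L ((q*h) • (X2 ^ (N-1)) ((X1 ^ (N-1)) u)) := by rw [hX3p u]
          _ = (q*h) • L ((X2 ^ (N-1)) ((X1 ^ (N-1)) u)) := map_smul L _ _
          _ = (q*h) • (Y2 ^ (N-1)) ((Y1 ^ (N-1)) (L u)) := by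
              rw [TriangleAux.L_pow (⇑L) X2 Y2 hL2 (N-1) _,
                TriangleAux.L_pow (⇑L) X1 Y1 hL1 (N-1) u]
          _ = (x1*x2) • Y3 (L u) := (hY3p (L u)).symm
      exact smul_right_injective V' hx12 h1
    exact ⟨L, hL1, hL2, hL3⟩
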